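/- Let M be a monoid in which every left unit is a unit, and suppose M has a unit different from the identity. Then, as an equation of cardinals, the relative rank of M modulo E(M) equals the rank of the group of units G(M) plus the relative rank of M modulo F(M): rank(M : E(M)) = rank(G(M)) + rank(M : F(M)). -/

import Mathlib

/-- The relative rank of a monoid `M` modulo a subset `A`: the least cardinality of a
subset `U ⊆ M` with `⟨A ∪ U⟩ = M`. -/
noncomputable def relRank {M : Type*} [Monoid M] (A : Set M) : Cardinal :=
  ⨅ U : {U : Set M // Submonoid.closure (A ∪ U) = ⊤}, Cardinal.mk U.1

/-- The rank of the group of units of `M`: the least cardinality of a subset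
`V ⊆ G(M)` generating all units. -/
noncomputable def unitRank (M : Type*) [Monoid M] : Cardinal :=
  ⨅ V : {V : Set M // V ⊆ {x : M | IsUnit x} ∧
    {x : M | IsUnit x} ⊆ ↑(Submonoid.closure V)}, Cardinal.mk V.1

private lemma factor_unit {M : Type*} [Monoid M]
    (h : ∀ x : M, (∃ a, a * x = 1) → IsUnit x)
    {x y : M} (hxy : IsUnit (x * y)) : IsUnit x ∧ IsUnit y := by
  obtain ⟨g, hg⟩ := hxy
  have hy : IsUnit y := by
    refine h y ⟨((g⁻¹ : Mˣ) : M) * x, ?_⟩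
    rw [mul_assoc, ← hg]; exact g.inv_mul
  have hxr : x * (y * ((g⁻¹ : Mˣ) : M)) = 1 := by
    rw [← mul_assoc, ← hg]; exact g.mul_inv
  obtain ⟨d, hd'⟩ := h _ ⟨x, hxr⟩
  have hx1 : x * (d : M) = 1 := by rw [hd']; exact hxr
  have hx : x = ((d⁻¹ : Mˣ) : M) := by
    have := congrArg (· * ((d⁻¹ : Mˣ) : M)) hx1
    simpa [mul_assoc] using this
  exact ⟨hx ▸ (d⁻¹).isUnit, hy⟩

/-- If every left unit of `M` is a unit and `M` has a non-identity unit, then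
`rank(M : E(M)) = rank(G(M)) + rank(M : F(M))`. -/
theorem stmt_16 (M : Type*) [Monoid M]
    (h : ∀ x : M, (∃ a, a * x = 1) → IsUnit x)
    (h1 : ∃ g : M, IsUnit g ∧ g ≠ 1) :
    relRank {e : M | e * e = e} =
      unitRank M +
        relRank ((Submonoid.closure ({e : M | e * e = e} ∪ {g : M | IsUnit g}) : Set M)) := by
  set E : Set M := {e : M | e * e = e} with hE
  set G : Set M := {g : M | IsUnit g} with hG
  set F : Set M := (Submonoid.closure (E ∪ G) : Set M) with hF
  apply le_antisymm
  · -- relRank E ≤ unitRank + relRank F : pick attaining witnesses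
    have hVne : Nonempty {V : Set M // V ⊆ G ∧ G ⊆ ↑(Submonoid.closure V)} :=
      ⟨⟨G, le_rfl, Submonoid.subset_closure⟩⟩
    have hWne : Nonempty {U : Set M // Submonoid.closure (F ∪ U) = ⊤} :=
      ⟨⟨Set.univ, by rw [Set.union_univ, Submonoid.closure_univ]⟩⟩
    obtain ⟨V₀, hV₀⟩ := csInf_mem (Set.range_nonempty
      (fun V : {V : Set M // V ⊆ G ∧ G ⊆ ↑(Submonoid.closure V)} => Cardinal.mk V.1))
    obtain ⟨W₀, hW₀⟩ := csInf_mem (Set.range_nonempty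
      (fun U : {U : Set M // Submonoid.closure (F ∪ U) = ⊤} => Cardinal.mk U.1))
    have hcl : Submonoid.closure (E ∪ (V₀.1 ∪ W₀.1)) = ⊤ := by
      rw [eq_top_iff]
      refine le_trans (le_of_eq W₀.2.symm) (Submonoid.closure_le.2 ?_)
      rintro x (hx | hx)
      · -- x ∈ F = closure (E ∪ G)
        refine Submonoid.closure_le.2 ?_ hx
        rintro y (hy | hy)
        · exact Submonoid.subset_closure (Or.inl hy)
        · -- y ∈ G ⊆ closure V₀ ≤ closure (E ∪ (V₀ ∪ W₀))
          have := V₀.2.2 hy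
          exact Submonoid.closure_mono
            (fun z hz => Or.inr (Or.inl hz) : V₀.1 ⊆ E ∪ (V₀.1 ∪ W₀.1)) this
      · exact Submonoid.subset_closure (Or.inr (Or.inr hx))
    calc relRank E ≤ Cardinal.mk ↥(V₀.1 ∪ W₀.1) :=
          ciInf_le' (fun U : {U : Set M // Submonoid.closure (E ∪ U) = ⊤} =>
            Cardinal.mk U.1) ⟨V₀.1 ∪ W₀.1, hcl⟩
      _ ≤ Cardinal.mk V₀.1 + Cardinal.mk W₀.1 := Cardinal.mk_union_le _ _
      _ = unitRank M + relRank F := (congrArg₂ (· + ·) hV₀ hW₀)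
  · -- unitRank + relRank F ≤ relRank E
    haveI : Nonempty {U : Set M // Submonoid.closure (E ∪ U) = ⊤} :=
      ⟨⟨Set.univ, by rw [Set.union_univ, Submonoid.closure_univ]⟩⟩
    apply le_ciInf
    rintro ⟨U, hU⟩
    -- every unit lies in closure (U ∩ G)
    have hGgen : G ⊆ ↑(Submonoid.closure (U ∩ G)) := by
      intro g hg
      have hmem : g ∈ Submonoid.closure (E ∪ U) := hU ▸ Submonoid.mem_top g
      revert hg
      refine Submonoid.closure_induction
        (motive := fun x _ => IsUnit x → x ∈ Submonoid.closure (U ∩ G)) ?_ ?_ ?_ hmem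
      · rintro x (hx | hx) hux
        · -- idempotent unit is 1
          have hx1 : x = 1 := by
            obtain ⟨u, hu⟩ := hux
            have h2 : x * ((u⁻¹ : Mˣ) : M) = 1 := by rw [← hu]; exact u.mul_inv
            calc x = x * x * ((u⁻¹ : Mˣ) : M) := by rw [mul_assoc, h2, mul_one]
              _ = x * ((u⁻¹ : Mˣ) : M) := by rw [hx]
              _ = 1 := h2
          rw [hx1]; exact Submonoid.one_mem _
        · exact Submonoid.subset_closure ⟨hx, hux⟩
      · intro _; exact Submonoid.one_mem _
      · intro x y _ _ ihx ihy hxy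
        obtain ⟨h1', h2'⟩ := factor_unit h hxy
        exact Submonoid.mul_mem _ (ihx h1') (ihy h2')
    have h1le : unitRank M ≤ Cardinal.mk ↥(U ∩ G) :=
      ciInf_le' (fun V : {V : Set M // V ⊆ G ∧ G ⊆ ↑(Submonoid.closure V)} =>
        Cardinal.mk V.1) ⟨U ∩ G, Set.inter_subset_right, hGgen⟩
    have h2le : relRank F ≤ Cardinal.mk ↥(U \ G) := by
      refine ciInf_le' (fun W : {W : Set M // Submonoid.closure (F ∪ W) = ⊤} =>
        Cardinal.mk W.1) ⟨U \ G, ?_⟩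
      rw [eq_top_iff, ← hU, Submonoid.closure_le]
      rintro x (hx | hx)
      · exact Submonoid.subset_closure (Or.inl
          (Submonoid.subset_closure (Or.inl hx)))
      · by_cases hxg : x ∈ G
        · exact Submonoid.subset_closure (Or.inl (Submonoid.subset_closure (Or.inr hxg)))
        · exact Submonoid.subset_closure (Or.inr ⟨hx, hxg⟩)
    calc unitRank M + relRank F ≤ Cardinal.mk ↥(U ∩ G) + Cardinal.mk ↥(U \ G) :=
          add_le_add h1le h2le
      _ = Cardinal.mk ↥((U ∩ G) ∪ (U \ G)) :=
          (Cardinal.mk_union_of_disjoint (Set.disjoint_of_subset_left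
            Set.inter_subset_right Set.disjoint_sdiff_right)).symm
      _ = Cardinal.mk ↥U := by rw [Set.inter_union_diff]
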